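/- Let s₀ > 0, β > 0, and let Θ: [s₀, ∞) → (0, ∞) be a C¹, strictly increasing function with lim_{s→∞} Θ(s) = +∞ such that s ↦ Θ(s)^{1/β} is convex on [s₀, ∞) and ∫_{s₀}^∞ Θ'(s)/(s Θ(s)) ds = +∞. Then lim_{δ→0⁺} δ · Θ^{-1}(δ^{−β}) = 0, where Θ^{-1}: [Θ(s₀), ∞) → [s₀, ∞) denotes the inverse of Θ. -/

import Mathlib

open MeasureTheory

theorem stmt_12 (s₀ β : ℝ) (hs₀ : 0 < s₀) (hβ : 0 < β)
    (Θ Θinv : ℝ → ℝ)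
    (hΘ_pos : ∀ s : ℝ, s₀ ≤ s → 0 < Θ s)
    (hΘ_mono : StrictMonoOn Θ (Set.Ici s₀))
    (hΘ_C1 : ContDiffOn ℝ 1 Θ (Set.Ici s₀))
    (hΘ_top : Filter.Tendsto Θ Filter.atTop Filter.atTop)
    (hΘ_conv : ConvexOn ℝ (Set.Ici s₀) (fun s => Θ s ^ (1 / β)))
    (hinv₁ : ∀ s : ℝ, s₀ ≤ s → Θinv (Θ s) = s)
    (hinv₂ : ∀ u : ℝ, Θ s₀ ≤ u → s₀ ≤ Θinv u ∧ Θ (Θinv u) = u)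
    (hdiv : ∫⁻ s in Set.Ioi s₀,
      ENNReal.ofReal (derivWithin Θ (Set.Ici s₀) s / (s * Θ s)) = ⊤) :
    Filter.Tendsto (fun δ : ℝ => δ * Θinv (δ ^ (-β)))
      (nhdsWithin 0 (Set.Ioi 0)) (nhds 0) := by
  set F : ℝ → ℝ := fun s => Θ s ^ (1 / β) with hF_def
  have hβ' : (0:ℝ) < 1/β := by positivity
  have hF_pos : ∀ s, s₀ ≤ s → 0 < F s := fun s hs => Real.rpow_pos_of_pos (hΘ_pos s hs) _
  have hF_top : Filter.Tendsto F Filter.atTop Filter.atTop :=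
    (tendsto_rpow_atTop hβ').comp hΘ_top
  -- Main claim: F s / s → ∞
  have hFs : Filter.Tendsto (fun s => F s / s) Filter.atTop Filter.atTop := by
    by_contra hcon
    rw [Filter.tendsto_atTop] at hcon
    push_neg at hcon
    obtain ⟨C, hC⟩ := hcon
    have hCz : ∃ᶠ z in Filter.atTop, F z < C * z := by
      refine hC.mp ?_
      filter_upwards [Filter.eventually_gt_atTop (0:ℝ)] with z hz h
      exact (div_lt_iff₀ hz).mp h
    have hC0 : 0 < C := by
      obtain ⟨z, hz1, hz2⟩ :=
        (hCz.and_eventually (Filter.eventually_ge_atTop (max s₀ 1))).exists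
      have hz0 : (0:ℝ) < z := lt_of_lt_of_le one_pos (le_trans (le_max_right _ _) hz2)
      have hFz : 0 < F z := hF_pos z (le_trans (le_max_left _ _) hz2)
      nlinarith
    -- global slope bound
    have key : ∀ x y : ℝ, s₀ ≤ x → x < y → F y - F x ≤ C * (y - x) := by
      intro x y hx hxy
      have hyx : (0:ℝ) < y - x := by linarith
      have t1 : Filter.Tendsto (fun z:ℝ => z - x) Filter.atTop Filter.atTop :=
        Filter.tendsto_atTop_add_const_right _ _ Filter.tendsto_id
      have t2 : Filter.Tendsto (fun z:ℝ => C*(y-x)*x / (z - x)) Filter.atTop (nhds 0) :=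
        t1.const_div_atTop _
      have t3 : Filter.Tendsto (fun z:ℝ => C*(y-x) + C*(y-x)*x/(z-x)) Filter.atTop
          (nhds (C*(y-x))) := by
        simpa using tendsto_const_nhds.add t2
      have t4 : Filter.Tendsto (fun z:ℝ => C*(y-x)*z/(z-x)) Filter.atTop (nhds (C*(y-x))) := by
        apply Filter.Tendsto.congr' _ t3
        filter_upwards [Filter.eventually_gt_atTop x] with z hz
        have hne : z - x ≠ 0 := sub_ne_zero.mpr (ne_of_gt hz)
        field_simp
        ring
      refine ge_of_tendsto_of_frequently t4 ?_
      refine (hCz.and_eventually (Filter.eventually_gt_atTop y)).mono ?_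
      rintro z ⟨hz1, hz2⟩
      have hzx : (0:ℝ) < z - x := by linarith
      have hFx : 0 < F x := hF_pos x hx
      have h1 := hΘ_conv.secant_mono_aux2 hx
        (show z ∈ Set.Ici s₀ from le_trans hx (by linarith)) hxy hz2
      calc F y - F x = (y-x) * ((F y - F x)/(y-x)) := by field_simp
        _ ≤ (y-x) * ((F z - F x)/(z-x)) := mul_le_mul_of_nonneg_left h1 hyx.le
        _ ≤ (y-x) * ((C*z)/(z-x)) := by gcongr; linarith
        _ = C*(y-x)*z/(z-x) := by ring
    -- derivative bound
    have hdC : ∀ s, s₀ ≤ s →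
        derivWithin Θ (Set.Ici s₀) s * (1/β) * Θ s ^ (1/β - 1) ≤ C := by
      intro s hs
      have hΘd : DifferentiableWithinAt ℝ Θ (Set.Ici s₀) s :=
        (hΘ_C1.differentiableOn one_ne_zero) s hs
      have hF' : HasDerivWithinAt F
          (derivWithin Θ (Set.Ici s₀) s * (1/β) * Θ s ^ (1/β-1)) (Set.Ici s₀) s :=
        hΘd.hasDerivWithinAt.rpow_const (Or.inl (hΘ_pos s hs).ne')
      rw [hasDerivWithinAt_iff_tendsto_slope] at hF'
      haveI : (nhdsWithin s (Set.Ici s₀ \ {s})).NeBot := by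
        refine Filter.NeBot.mono (nhdsGT_neBot s) (nhdsWithin_mono s ?_)
        intro t ht
        exact ⟨le_trans hs (le_of_lt ht), ne_of_gt ht⟩
      refine le_of_tendsto hF' (Filter.eventually_of_mem self_mem_nhdsWithin ?_)
      rintro y ⟨hy1, hy2⟩
      have hyne : y ≠ s := hy2
      rw [slope_def_field]
      rcases lt_or_gt_of_ne hyne with h | h
      · have hk := key y s hy1 h
        rw [div_le_iff_of_neg (by linarith : y - s < 0)]
        linarith
      · have hk := key s y hs h
        rw [div_le_iff₀ (by linarith : (0:ℝ) < y - s)]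
        linarith
    -- linear lower bound
    obtain ⟨s₁, hs₁, hFs₁⟩ : ∃ s₁, s₀ < s₁ ∧ F s₀ < F s₁ := by
      obtain ⟨s₁, h1, h2⟩ :=
        ((Filter.eventually_gt_atTop s₀).and (hF_top.eventually_gt_atTop (F s₀))).exists
      exact ⟨s₁, h1, h2⟩
    set m := (F s₁ - F s₀) / (s₁ - s₀) with hm_def
    have hm : 0 < m := div_pos (by linarith) (by linarith)
    have hlow : ∀ s, 2*s₁ ≤ s → m/2 * s ≤ F s := by
      intro s hs
      have hs₁s : s₁ < s := by linarith
      have h1 := hΘ_conv.slope_mono_adjacent (Set.self_mem_Ici)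
        (show s ∈ Set.Ici s₀ by simp only [Set.mem_Ici]; linarith) hs₁ hs₁s
      have h2 : m * (s - s₁) ≤ F s - F s₁ := by
        rw [← le_div_iff₀ (by linarith : (0:ℝ) < s - s₁)]
        exact h1
      have hFs₁0 : 0 < F s₁ := hF_pos _ hs₁.le
      nlinarith [mul_nonneg hm.le (by linarith : (0:ℝ) ≤ s/2 - s₁)]
    -- integrand bound for large s
    have hbound : ∀ s ∈ Set.Ioi (2*s₁),
        derivWithin Θ (Set.Ici s₀) s / (s * Θ s) ≤ (2*β*C/m) * s ^ (-2:ℝ) := by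
      intro s hs
      rw [Set.mem_Ioi] at hs
      have hss₀ : s₀ ≤ s := by linarith
      have hΘs : 0 < Θ s := hΘ_pos s hss₀
      have hFsp : 0 < F s := hF_pos s hss₀
      have hspos : 0 < s := by linarith
      have hd := hdC s hss₀
      have h2 : Θ s ^ (1/β - 1) * Θ s ^ (1 - 1/β) = 1 := by
        rw [← Real.rpow_add hΘs]
        norm_num
      have hb2 : (0:ℝ) < Θ s ^ (1 - 1/β) := Real.rpow_pos_of_pos hΘs _
      have h3 := mul_le_mul_of_nonneg_right hd
        (le_of_lt (by positivity : (0:ℝ) < β * Θ s ^ (1-1/β)))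
      have hg : derivWithin Θ (Set.Ici s₀) s ≤ β * C * Θ s ^ (1 - 1/β) := by
        calc derivWithin Θ (Set.Ici s₀) s
            = derivWithin Θ (Set.Ici s₀) s * ((1/β) * β) *
              (Θ s ^ (1/β-1) * Θ s ^ (1-1/β)) := by
              rw [h2, one_div, inv_mul_cancel₀ hβ.ne', mul_one, mul_one]
          _ = derivWithin Θ (Set.Ici s₀) s * (1/β) * Θ s ^ (1/β-1) *
              (β * Θ s ^ (1-1/β)) := by ring
          _ ≤ C * (β * Θ s ^ (1-1/β)) := h3
          _ = β * C * Θ s ^ (1-1/β) := by ring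
      have hΘF : Θ s ^ (1 - 1/β) / Θ s = (F s)⁻¹ := by
        rw [div_eq_mul_inv, ← Real.rpow_neg_one (Θ s), ← Real.rpow_add hΘs,
          show (1 - 1/β) + (-1) = -(1/β) by ring, Real.rpow_neg hΘs.le]
      have hlow' : m/2 * s ≤ F s := hlow s hs.le
      have e3 : s ^ (-2:ℝ) = (s*s)⁻¹ := by
        rw [Real.rpow_neg hspos.le, show (2:ℝ) = ((2:ℕ):ℝ) by norm_num,
          Real.rpow_natCast]
        norm_num [sq]
      rw [e3]
      calc derivWithin Θ (Set.Ici s₀) s / (s * Θ s)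
          ≤ (β * C * Θ s ^ (1-1/β)) / (s * Θ s) := by gcongr
        _ = β * C * (Θ s ^ (1-1/β) / Θ s) / s := by ring
        _ = β * C * (F s)⁻¹ / s := by rw [hΘF]
        _ ≤ β * C * (m/2 * s)⁻¹ / s := by
            have h9 : (F s)⁻¹ ≤ (m/2 * s)⁻¹ :=
              inv_anti₀ (mul_pos (half_pos hm) hspos) hlow'
            gcongr
        _ = (2*β*C/m) * (s*s)⁻¹ := by
            field_simp
    -- finiteness of the integral: contradiction
    set S := 2*s₁ with hS_def
    have hS0 : (0:ℝ) < S := by simp only [hS_def]; linarith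
    have hSs₀ : s₀ < S := by simp only [hS_def]; linarith
    have hgcont : ContinuousOn (fun s => derivWithin Θ (Set.Ici s₀) s / (s * Θ s))
        (Set.Icc s₀ S) := by
      apply ContinuousOn.mono _ (Set.Icc_subset_Ici_self)
      apply ContinuousOn.div
      · exact hΘ_C1.continuousOn_derivWithin (uniqueDiffOn_Ici s₀) le_rfl
      · exact continuousOn_id.mul hΘ_C1.continuousOn
      · intro x hx
        exact (mul_pos (lt_of_lt_of_le hs₀ hx) (hΘ_pos x hx)).ne'
    obtain ⟨B, hB⟩ := isCompact_Icc.exists_bound_of_continuousOn hgcont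
    have I1 : ∫⁻ s in Set.Ioc s₀ S,
        ENNReal.ofReal (derivWithin Θ (Set.Ici s₀) s / (s * Θ s)) < ⊤ := by
      calc ∫⁻ s in Set.Ioc s₀ S,
            ENNReal.ofReal (derivWithin Θ (Set.Ici s₀) s / (s * Θ s))
          ≤ ∫⁻ _s in Set.Ioc s₀ S, ENNReal.ofReal B := by
            apply setLIntegral_mono' measurableSet_Ioc
            intro x hx
            apply ENNReal.ofReal_le_ofReal
            have := hB x (Set.Ioc_subset_Icc_self hx)
            rw [Real.norm_eq_abs] at this
            exact le_trans (le_abs_self _) this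
        _ = ENNReal.ofReal B * volume (Set.Ioc s₀ S) := setLIntegral_const _ _
        _ < ⊤ := by
            rw [Real.volume_Ioc]
            exact ENNReal.mul_lt_top ENNReal.ofReal_lt_top ENNReal.ofReal_lt_top
    have I2 : ∫⁻ s in Set.Ioi S,
        ENNReal.ofReal (derivWithin Θ (Set.Ici s₀) s / (s * Θ s)) < ⊤ := by
      have hint : IntegrableOn (fun s => (2*β*C/m) * s ^ (-2:ℝ)) (Set.Ioi S) :=
        (integrableOn_Ioi_rpow_of_lt (by norm_num) hS0).const_mul _
      calc ∫⁻ s in Set.Ioi S,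
            ENNReal.ofReal (derivWithin Θ (Set.Ici s₀) s / (s * Θ s))
          ≤ ∫⁻ s in Set.Ioi S, ENNReal.ofReal ((2*β*C/m) * s ^ (-2:ℝ)) := by
            apply setLIntegral_mono' measurableSet_Ioi
            intro x hx
            exact ENNReal.ofReal_le_ofReal (hbound x hx)
        _ < ⊤ := hint.setLIntegral_lt_top
    have hsub : Set.Ioi s₀ ⊆ Set.Ioc s₀ S ∪ Set.Ioi S := by
      intro x hx
      rcases le_or_gt x S with h | h
      · exact Or.inl ⟨hx, h⟩
      · exact Or.inr h
    have : (⊤:ENNReal) < ⊤ := by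
      calc (⊤:ENNReal) = ∫⁻ s in Set.Ioi s₀,
            ENNReal.ofReal (derivWithin Θ (Set.Ici s₀) s / (s * Θ s)) := hdiv.symm
        _ ≤ ∫⁻ s in Set.Ioc s₀ S ∪ Set.Ioi S,
            ENNReal.ofReal (derivWithin Θ (Set.Ici s₀) s / (s * Θ s)) :=
            lintegral_mono_set hsub
        _ ≤ (∫⁻ s in Set.Ioc s₀ S,
              ENNReal.ofReal (derivWithin Θ (Set.Ici s₀) s / (s * Θ s))) +
            ∫⁻ s in Set.Ioi S,
              ENNReal.ofReal (derivWithin Θ (Set.Ici s₀) s / (s * Θ s)) :=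
            lintegral_union_le _ _ _
        _ < ⊤ := ENNReal.add_lt_top.mpr ⟨I1, I2⟩
    exact lt_irrefl _ this
  -- conclusion
  have h1 : Filter.Tendsto (fun δ : ℝ => δ ^ (-β)) (nhdsWithin 0 (Set.Ioi 0))
      Filter.atTop := by
    have h2 := (tendsto_rpow_atTop hβ).comp tendsto_inv_nhdsGT_zero
    apply Filter.Tendsto.congr' _ h2
    filter_upwards [self_mem_nhdsWithin] with δ hδ
    have hδ0 : (0:ℝ) < δ := hδ
    show (δ⁻¹) ^ β = δ ^ (-β)
    rw [Real.inv_rpow hδ0.le, ← Real.rpow_neg hδ0.le]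
  have hinvTop : Filter.Tendsto Θinv Filter.atTop Filter.atTop := by
    rw [Filter.tendsto_atTop]
    intro b
    filter_upwards [Filter.eventually_ge_atTop (Θ (max b s₀))] with u hu
    have hbs : s₀ ≤ max b s₀ := le_max_right _ _
    have hu' : Θ s₀ ≤ u :=
      le_trans (hΘ_mono.monotoneOn (Set.self_mem_Ici) hbs hbs) hu
    obtain ⟨hge, hTh⟩ := hinv₂ u hu'
    by_contra hlt
    push_neg at hlt
    have h3 : Θinv u < max b s₀ := lt_of_lt_of_le hlt (le_max_left _ _)
    have := hΘ_mono hge hbs h3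
    rw [hTh] at this
    exact absurd hu (not_le.mpr this)
  have hratio : Filter.Tendsto (fun s => s / F s) Filter.atTop (nhds 0) := by
    have h2 := hFs.inv_tendsto_atTop
    apply Filter.Tendsto.congr' _ h2
    filter_upwards [Filter.eventually_ge_atTop (max s₀ 1)] with s hs
    show (F s / s)⁻¹ = s / F s
    rw [inv_div]
  have hfinal := hratio.comp (hinvTop.comp h1)
  apply Filter.Tendsto.congr' _ hfinal
  filter_upwards [self_mem_nhdsWithin,
    h1.eventually (Filter.eventually_ge_atTop (Θ s₀))] with δ hδ hδ2
  have hδ0 : (0:ℝ) < δ := hδ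
  obtain ⟨hge, hTh⟩ := hinv₂ _ hδ2
  show Θinv (δ^(-β)) / F (Θinv (δ^(-β))) = δ * Θinv (δ^(-β))
  have hFv : F (Θinv (δ^(-β))) = δ⁻¹ := by
    show Θ (Θinv (δ^(-β))) ^ (1/β) = δ⁻¹
    rw [hTh, ← Real.rpow_mul hδ0.le,
      show -β * (1/β) = (-1:ℝ) by field_simp, Real.rpow_neg_one]
  rw [hFv, div_eq_mul_inv, inv_inv, mul_comm]
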